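/- Let α ∈ (0,1] and let x ∈ (0, ᾱ) be irrational. Then for every n ≥ 0 one has β_{α,n} = |q_{α,n}·x − p_{α,n}|. -/

import Mathlib

open Set Filter

/-- The `α`-continued fraction map `A_α(x) = |1/x − ⌊1/x + 1 − α⌋|`. -/
noncomputable def Aa (α : ℝ) (x : ℝ) : ℝ := |1 / x - ⌊1 / x + 1 - α⌋|

/-- The orbit `x_{α,n}` of `x` under `A_α` (with `x_{α,0} = x`). -/
noncomputable def xa (α x : ℝ) (n : ℕ) : ℝ := (Aa α)^[n] x

/-- `betaP α x (n+1) = β_{α,n} = x_{α,0}⋯x_{α,n}`; `betaP α x 0 = β_{α,-1} = 1`. -/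
noncomputable def betaP (α x : ℝ) (n : ℕ) : ℝ := ∏ i ∈ Finset.range n, xa α x i

/-- `aa α x n = a_{α,n+1} = ⌊1/x_{α,n} + 1 − α⌋`. -/
noncomputable def aa (α x : ℝ) (n : ℕ) : ℤ := ⌊1 / xa α x n + 1 - α⌋

/-- `ea α x n = ε_{α,n}`: `ε_{α,0} = 1` and `ε_{α,n+1} = sign(1/x_{α,n} − a_{α,n+1})`. -/
noncomputable def ea (α x : ℝ) : ℕ → ℝ
  | 0 => 1
  | n + 1 => if 0 < 1 / xa α x n - aa α x n then 1 else -1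

/-- `pa α x (n+1) = p_{α,n}`; `pa α x 0 = p_{α,-1} = 1`. -/
noncomputable def pa (α x : ℝ) : ℕ → ℝ
  | 0 => 1
  | 1 => 0
  | n + 2 => aa α x n * pa α x (n + 1) + ea α x n * pa α x n

/-- `qa α x (n+1) = q_{α,n}`; `qa α x 0 = q_{α,-1} = 0`. -/
noncomputable def qa (α x : ℝ) : ℕ → ℝ
  | 0 => 0
  | 1 => 1
  | n + 2 => aa α x n * qa α x (n + 1) + ea α x n * qa α x n

/-- The sign `σ_n`: `σ_0 = −1`, `σ_{n+1} = −ε_n σ_n`. -/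
noncomputable def sg (α x : ℝ) : ℕ → ℝ
  | 0 => -1
  | n + 1 => -(ea α x n) * sg α x n

lemma ea_succ (α x : ℝ) (n : ℕ) :
    ea α x (n + 1) = if 0 < 1 / xa α x n - aa α x n then 1 else -1 := rfl

lemma abs_ea (α x : ℝ) (n : ℕ) : |ea α x n| = 1 := by
  cases n with
  | zero => simp [ea]
  | succ m => rw [ea_succ]; split_ifs <;> simp

lemma abs_sg (α x : ℝ) (n : ℕ) : |sg α x n| = 1 := by
  induction n with
  | zero => simp [sg]
  | succ m ih => simp [sg, abs_mul, abs_ea, ih]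

lemma xa_succ (α x : ℝ) (n : ℕ) :
    xa α x (n + 1) = |1 / xa α x n - aa α x n| := by
  simp [xa, Function.iterate_succ_apply', Aa, aa]

lemma ea_mul_xa (α x : ℝ) (n : ℕ) :
    ea α x (n + 1) * xa α x (n + 1) = 1 / xa α x n - aa α x n := by
  rw [xa_succ, ea_succ]
  split_ifs with h
  · rw [abs_of_pos h]; ring
  · rw [abs_of_nonpos (le_of_not_gt h)]; ring

lemma irr_xa (α x : ℝ) (hirr : Irrational x) (n : ℕ) : Irrational (xa α x n) := by
  induction n with
  | zero => simpa [xa] using hirr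
  | succ m ih =>
    rw [xa_succ]
    have h1 : Irrational (1 / xa α x m - aa α x m) := by
      have := (ih.inv).sub_intCast (aa α x m)
      simpa [one_div] using this
    rcases abs_choice (1 / xa α x m - aa α x m) with h | h
    · rwa [h]
    · rw [h]; exact h1.neg

lemma xa_nonneg (α x : ℝ) (hx : 0 < x) (n : ℕ) : 0 ≤ xa α x n := by
  cases n with
  | zero => simpa [xa] using hx.le
  | succ m => rw [xa_succ]; exact abs_nonneg _

lemma betaP_nonneg (α x : ℝ) (hx : 0 < x) (n : ℕ) : 0 ≤ betaP α x n :=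
  Finset.prod_nonneg fun i _ => xa_nonneg α x hx i

lemma key (α x : ℝ) (hirr : Irrational x) :
    ∀ m, qa α x m * x - pa α x m = sg α x m * betaP α x m := by
  have hx0 : ∀ k, xa α x k ≠ 0 := fun k => (irr_xa α x hirr k).ne_zero
  intro m
  induction m using Nat.strong_induction_on with
  | _ m ih =>
    match m with
    | 0 => simp [qa, pa, sg, betaP]
    | 1 =>
      simp [qa, pa, sg, betaP, ea, xa]
    | n + 2 =>
      have h1 := ih (n + 1) (by omega)
      have h2 := ih n (by omega)
      have hb1 : betaP α x (n + 1) = betaP α x n * xa α x n := by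
        simp [betaP, Finset.prod_range_succ]
      have hb2 : betaP α x (n + 2) = betaP α x (n + 1) * xa α x (n + 1) := by
        simp [betaP, Finset.prod_range_succ]
      have he := ea_mul_xa α x n
      have hxn := hx0 n
      have hax : (aa α x n : ℝ) * xa α x n = 1 - ea α x (n + 1) * xa α x (n + 1) * xa α x n := by
        rw [he]; field_simp; ring
      have hq : qa α x (n + 2) = aa α x n * qa α x (n + 1) + ea α x n * qa α x n := rfl
      have hp : pa α x (n + 2) = aa α x n * pa α x (n + 1) + ea α x n * pa α x n := rfl
      have hs2 : sg α x (n + 2) = -(ea α x (n + 1)) * sg α x (n + 1) := rfl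
      have hs1 : sg α x (n + 1) = -(ea α x n) * sg α x n := rfl
      have hea : ea α x n * ea α x n = 1 := by
        have := abs_ea α x n
        nlinarith [abs_nonneg (ea α x n), sq_abs (ea α x n)]
      rw [hq, hp, hs2, hb2, hb1]
      have expand : (aa α x n * qa α x (n + 1) + ea α x n * qa α x n) * x -
          (aa α x n * pa α x (n + 1) + ea α x n * pa α x n) =
          aa α x n * (qa α x (n + 1) * x - pa α x (n + 1)) +
          ea α x n * (qa α x n * x - pa α x n) := by ring
      rw [expand, h1, h2, hb1, hs1]
      linear_combination (-(ea α x n * sg α x n * betaP α x n * xa α x (n + 1) * 0 + ea α x n * sg α x n * betaP α x n)) * hax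

theorem beta_eq_abs_qx_sub_p (α : ℝ) (hα : α ∈ Set.Ioc (0 : ℝ) 1) (x : ℝ)
    (hirr : Irrational x) (hx : x ∈ Set.Ioo 0 (max α (1 - α))) (n : ℕ) :
    betaP α x (n + 1) = |qa α x (n + 1) * x - pa α x (n + 1)| := by
  rw [key α x hirr (n + 1), abs_mul, abs_sg, one_mul,
    abs_of_nonneg (betaP_nonneg α x hx.1 (n + 1))]
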